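/- Let 𝒳 and 𝒰 be finite sets, S an arbitrary (possibly infinite) index set, and {W_s : 𝒳 → P(𝒰)}_{s∈S} a family of stochastic matrices (channels). For every natural number l with l ≥ 2|𝒰|², there exists a finite family of stochastic matrices {W_{s'} : 𝒳 → P(𝒰)}_{s'∈S'} with |S'| ≤ (l+1)^{|𝒳×𝒰|} such that for every s ∈ S there exists s' ∈ S' with: (i) |W_s(u|x) − W_{s'}(u|x)| ≤ |𝒰|/l for all x, u, and (ii) W_s(u|x) ≤ e^{2|𝒰|²/l} W_{s'}(u|x) for all x, u. -/

import Mathlib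

set_option maxHeartbeats 1000000

/-- Finite approximation of an arbitrary family of channels. -/
theorem channel_approximation {𝒳 𝒰 : Type*} [Fintype 𝒳] [Fintype 𝒰] {S : Type*}
    (W : S → 𝒳 → 𝒰 → ℝ)
    (hW : ∀ s x, (∀ u, 0 ≤ W s x u) ∧ ∑ u, W s x u = 1)
    (l : ℕ) (hl : 2 * (Fintype.card 𝒰) ^ 2 ≤ l) :
    ∃ S' : Finset (𝒳 → 𝒰 → ℝ),
      S'.card ≤ (l + 1) ^ (Fintype.card 𝒳 * Fintype.card 𝒰) ∧
      (∀ W' ∈ S', ∀ x, (∀ u, 0 ≤ W' x u) ∧ ∑ u, W' x u = 1) ∧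
      ∀ s : S, ∃ W' ∈ S',
        (∀ x u, |W s x u - W' x u| ≤ (Fintype.card 𝒰 : ℝ) / l) ∧
        (∀ x u, W s x u ≤ Real.exp (2 * (Fintype.card 𝒰 : ℝ) ^ 2 / l) * W' x u) := by
  classical
  by_cases hU : Nonempty 𝒰
  · -- main case
    set k := Fintype.card 𝒰 with hkdef
    have hk : 1 ≤ k := Fintype.card_pos
    have hl2 : 2 ≤ l := le_trans (by nlinarith) hl
    have hlpos : (0:ℝ) < l := by exact_mod_cast lt_of_lt_of_le (by norm_num) hl2
    have hkR : (1:ℝ) ≤ k := by exact_mod_cast hk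
    set Q : (𝒳 → 𝒰 → Fin (l+1)) → 𝒳 → 𝒰 → ℝ := fun m x u =>
      ((m x u : ℝ) + 1) / (∑ u', ((m x u' : ℝ) + 1)) with hQ
    have hDpos : ∀ (m : 𝒳 → 𝒰 → Fin (l+1)) (x : 𝒳),
        (0:ℝ) < ∑ u', ((m x u' : ℝ) + 1) := by
      intro m x
      apply Finset.sum_pos (fun u _ => by positivity) Finset.univ_nonempty
    refine ⟨Finset.univ.image Q, ?_, ?_, ?_⟩
    · calc (Finset.univ.image Q).card ≤ (Finset.univ : Finset (𝒳 → 𝒰 → Fin (l+1))).card :=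
            Finset.card_image_le
        _ = (l + 1) ^ (Fintype.card 𝒳 * k) := by
            simp [Finset.card_univ, Fintype.card_fun, ← pow_mul, mul_comm]
            rfl
    · intro W' hW' x
      obtain ⟨m, -, rfl⟩ := Finset.mem_image.mp hW'
      refine ⟨fun u => by positivity, ?_⟩
      rw [← Finset.sum_div, div_self (ne_of_gt (hDpos m x))]
    · intro s
      have hWle1 : ∀ x u, W s x u ≤ 1 := by
        intro x u
        rw [← (hW s x).2]
        exact Finset.single_le_sum (fun u _ => (hW s x).1 u) (Finset.mem_univ u)
      have hfloor_le : ∀ x u, ⌊(l:ℝ) * W s x u⌋₊ < l + 1 := by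
        intro x u
        have h1 : (l:ℝ) * W s x u ≤ (l:ℝ) := by nlinarith [hWle1 x u]
        have := Nat.floor_le_floor h1
        rw [Nat.floor_natCast] at this
        omega
      set m : 𝒳 → 𝒰 → Fin (l+1) := fun x u => ⟨⌊(l:ℝ) * W s x u⌋₊, hfloor_le x u⟩ with hm
      -- common facts
      have hfl : ∀ x u, ((m x u : ℝ)) ≤ l * W s x u := fun x u =>
        Nat.floor_le (mul_nonneg hlpos.le ((hW s x).1 u))
      have hfu : ∀ x u, (l:ℝ) * W s x u < (m x u : ℝ) + 1 := fun x u =>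
        Nat.lt_floor_add_one _
      have hDlb : ∀ x, (l:ℝ) < ∑ u', ((m x u' : ℝ) + 1) := by
        intro x
        have h0 : ∑ u', (l:ℝ) * W s x u' < ∑ u', ((m x u' : ℝ) + 1) :=
          Finset.sum_lt_sum_of_nonempty Finset.univ_nonempty (fun u' _ => hfu x u')
        calc (l:ℝ) = ∑ u', (l:ℝ) * W s x u' := by rw [← Finset.mul_sum, (hW s x).2, mul_one]
          _ < _ := h0
      have hDub : ∀ x, ∑ u', ((m x u' : ℝ) + 1) ≤ (l:ℝ) + k := by
        intro x
        have h1 : ∑ u', ((m x u' : ℝ)) ≤ ∑ u', (l:ℝ) * W s x u' :=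
          Finset.sum_le_sum (fun u' _ => hfl x u')
        have h2 : ∑ u', (l:ℝ) * W s x u' = l := by rw [← Finset.mul_sum, (hW s x).2, mul_one]
        have h3 : ∑ u', ((m x u' : ℝ) + 1) = (∑ u', ((m x u' : ℝ))) + k := by
          rw [Finset.sum_add_distrib]
          simp [hkdef, Finset.card_univ]
        linarith
      refine ⟨Q m, Finset.mem_image_of_mem Q (Finset.mem_univ m), fun x u => ?_, fun x u => ?_⟩
      · -- (i)
        simp only [hQ]
        set a : ℝ := (m x u : ℝ) with hadef
        set D : ℝ := ∑ u', ((m x u' : ℝ) + 1) with hDdef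
        set p : ℝ := W s x u with hpdef
        have ha0 : (0:ℝ) ≤ a := Nat.cast_nonneg _
        have hDpos' : (0:ℝ) < D := hDpos m x
        have e1 : p ≤ (a + 1) / l := by rw [le_div_iff₀ hlpos]; nlinarith [hfu x u]
        have e2 : a / l ≤ p := by rw [div_le_iff₀ hlpos]; nlinarith [hfl x u]
        have e3 : (a + 1) / D ≤ (a + 1) / l := by gcongr; · linarith [hDlb x]
        have e4 : (a + 1) / ((l:ℝ) + k) ≤ (a + 1) / D := by gcongr; exact hDub x
        have haL : a ≤ (l:ℝ) := by nlinarith [hfl x u, hWle1 x u, hlpos]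
        have h7 : a + 1 ≤ (l:ℝ) + k := by linarith
        have h5 : (a + 1) / l - (a + 1) / ((l:ℝ) + k) ≤ (k:ℝ) / l := by
          rw [div_sub_div _ _ (ne_of_gt hlpos) (by positivity),
            div_le_div_iff₀ (by positivity) hlpos]
          nlinarith [mul_le_mul_of_nonneg_right h7
            (show (0:ℝ) ≤ (k:ℝ) * l by positivity)]
        have h8 : (a + 1) / (l:ℝ) ≤ a / l + (k:ℝ) / l := by
          rw [← add_div]
          gcongr
        rw [abs_le]
        constructor
        · linarith
        · linarith
      · -- (ii)
        simp only [hQ]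
        set a : ℝ := (m x u : ℝ) with hadef
        set D : ℝ := ∑ u', ((m x u' : ℝ) + 1) with hDdef
        set p : ℝ := W s x u with hpdef
        have ha0 : (0:ℝ) ≤ a := Nat.cast_nonneg _
        have hDpos' : (0:ℝ) < D := hDpos m x
        have e1 : p ≤ (a + 1) / l := by rw [le_div_iff₀ hlpos]; nlinarith [hfu x u]
        set E : ℝ := Real.exp (2 * (k:ℝ) ^ 2 / l) with hEdef
        have hE1 : (l:ℝ) + k ≤ E * l := by
          have hx1 : (k:ℝ) / l + 1 ≤ Real.exp ((k:ℝ) / l) := Real.add_one_le_exp _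
          have hx2 : Real.exp ((k:ℝ) / l) ≤ E := by
            apply Real.exp_le_exp.mpr
            gcongr
            · nlinarith
          have hx3 : ((k:ℝ) / l + 1) * l = (k:ℝ) + l := by field_simp
          nlinarith [Real.exp_pos ((k:ℝ)/l)]
        have hE0 : 0 < E := Real.exp_pos _
        have key : (a + 1) / l ≤ E * ((a + 1) / D) := by
          rw [← mul_div_assoc, div_le_div_iff₀ hlpos hDpos']
          have q1 : (a + 1) * D ≤ (a + 1) * ((l:ℝ) + k) :=
            mul_le_mul_of_nonneg_left (hDub x) (by positivity)
          have q2 : (a + 1) * ((l:ℝ) + k) ≤ (a + 1) * (E * l) :=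
            mul_le_mul_of_nonneg_left hE1 (by positivity)
          nlinarith
        linarith
  · rw [not_nonempty_iff] at hU
    by_cases hS : Nonempty S
    · by_cases hX : Nonempty 𝒳
      · exfalso
        obtain ⟨s⟩ := hS; obtain ⟨x⟩ := hX
        have h2 := (hW s x).2
        rw [Finset.univ_eq_empty, Finset.sum_empty] at h2
        norm_num at h2
      · refine ⟨{fun _ _ => 0}, ?_, ?_, ?_⟩
        · simpa using Nat.one_le_pow _ _ (Nat.succ_pos l)
        · intro W' _ x; exact absurd ⟨x⟩ hX
        · intro s
          exact ⟨fun _ _ => 0, Finset.mem_singleton_self _,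
            fun x => absurd ⟨x⟩ hX, fun x => absurd ⟨x⟩ hX⟩
    · exact ⟨∅, Nat.zero_le _, by simp, fun s => absurd ⟨s⟩ hS⟩
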